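/- Let 0 ≤ η₁, η₂ ≤ 1 with η₁² + η₂² = 1, and let Λ be a joint map for the pair of noisy identity qubit channels (Λ_{η₁}, Λ_{η₂}). Then for all unit vectors e, d ∈ ℝ³ with e·d = 0, one has Λ( (e·σ) ⊗ (d·σ) ) = 0. -/

import Mathlib

open Matrix Kronecker
open scoped ComplexOrder

noncomputable section

/-- 2×2 complex matrices. -/
abbrev M2 : Type := Matrix (Fin 2) (Fin 2) ℂ

/-- 4×4 complex matrices, identified with `M2 ⊗ M2` via the Kronecker product. -/
abbrev M4 : Type := Matrix (Fin 2 × Fin 2) (Fin 2 × Fin 2) ℂ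

/-- The noisy identity qubit channel `Λ_η(A) = η A + ((1-η)/2) tr(A) I` (Heisenberg picture). -/
def noisyId (η : ℝ) (A : M2) : M2 :=
  (η : ℂ) • A + (((1 - η) / 2 : ℝ) : ℂ) • (A.trace • (1 : M2))

/-- `Λ` is a joint map for the pair `(Λ_{η₁}, Λ_{η₂})` of noisy identity channels:
it sends Kronecker products of positive semidefinite matrices to positive semidefinite
matrices and has the two channels as its margins. -/
def IsJointMap (η₁ η₂ : ℝ) (Λ : M4 →ₗ[ℂ] M2) : Prop :=
  (∀ A B : M2, A.PosSemidef → B.PosSemidef → (Λ (A ⊗ₖ B)).PosSemidef) ∧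
  (∀ X : M2, Λ (X ⊗ₖ (1 : M2)) = noisyId η₁ X) ∧
  (∀ Y : M2, Λ ((1 : M2) ⊗ₖ Y) = noisyId η₂ Y)

/-- Pauli matrices. -/
def pauli1 : M2 := !![0, 1; 1, 0]
def pauli2 : M2 := !![0, -Complex.I; Complex.I, 0]
def pauli3 : M2 := !![1, 0; 0, -1]

/-- `n · σ = n₁σ₁ + n₂σ₂ + n₃σ₃` for a real vector `n ∈ ℝ³`. -/
def dotSigma (n : Fin 3 → ℝ) : M2 :=
  (n 0 : ℂ) • pauli1 + (n 1 : ℂ) • pauli2 + (n 2 : ℂ) • pauli3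

/- ### Auxiliary lemmas -/

lemma dotSigma_00 (n : Fin 3 → ℝ) : dotSigma n 0 0 = (n 2 : ℂ) := by
  simp [dotSigma, pauli1, pauli2, pauli3]
lemma dotSigma_01 (n : Fin 3 → ℝ) : dotSigma n 0 1 = (n 0 : ℂ) - (n 1 : ℂ) * Complex.I := by
  simp [dotSigma, pauli1, pauli2, pauli3]; ring
lemma dotSigma_10 (n : Fin 3 → ℝ) : dotSigma n 1 0 = (n 0 : ℂ) + (n 1 : ℂ) * Complex.I := by
  simp [dotSigma, pauli1, pauli2, pauli3]
lemma dotSigma_11 (n : Fin 3 → ℝ) : dotSigma n 1 1 = -(n 2 : ℂ) := by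
  simp [dotSigma, pauli1, pauli2, pauli3]

lemma dotSigma_trace (n : Fin 3 → ℝ) : (dotSigma n).trace = 0 := by
  rw [Matrix.trace_fin_two, dotSigma_00, dotSigma_11]; ring

lemma dotSigma_neg (n : Fin 3 → ℝ) : dotSigma (fun i => -(n i)) = - dotSigma n := by
  simp [dotSigma]; module

lemma one_add_dotSigma_psd (n : Fin 3 → ℝ) (hn : (∑ i, n i ^ 2) = 1) :
    ((1 : M2) + dotSigma n).PosSemidef := by
  rw [Fin.sum_univ_three] at hn
  refine Matrix.PosSemidef.of_dotProduct_mulVec_nonneg ?_ ?_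
  · unfold Matrix.IsHermitian
    ext i j
    fin_cases i <;> fin_cases j <;>
      simp [conjTranspose_apply, dotSigma_00, dotSigma_01, dotSigma_10, dotSigma_11,
        Matrix.one_apply, Complex.ext_iff]
  · intro x
    have hx : star x ⬝ᵥ ((1 : M2) + dotSigma n) *ᵥ x =
        (((1 + n 2) * Complex.normSq (x 0) + (1 - n 2) * Complex.normSq (x 1)
          + 2 * n 0 * ((x 0).re * (x 1).re + (x 0).im * (x 1).im)
          + 2 * n 1 * ((x 0).re * (x 1).im - (x 0).im * (x 1).re) : ℝ) : ℂ) := by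
      simp [dotProduct, mulVec, Fin.sum_univ_two, Matrix.add_apply, Matrix.one_apply,
        dotSigma_00, dotSigma_01, dotSigma_10, dotSigma_11, Complex.ext_iff,
        Complex.normSq_apply]
      constructor <;> ring
    rw [hx]
    rw [Complex.le_def]
    simp only [Complex.zero_re, Complex.zero_im, Complex.ofReal_im, Complex.ofReal_re]
    refine ⟨?_, by trivial⟩
    set A := (x 0).re; set B := (x 0).im; set C := (x 1).re; set D := (x 1).im
    simp only [Complex.normSq_apply]
    nlinarith [sq_nonneg (n 0 * A - n 1 * B + (1 - n 2) * C),
      sq_nonneg (n 0 * B + n 1 * A + (1 - n 2) * D),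
      sq_nonneg (n 0 * C + n 1 * D + (1 + n 2) * A),
      sq_nonneg (n 0 * D - n 1 * C + (1 + n 2) * B)]

lemma psd2_facts (N : M2) (hN : N.PosSemidef) :
    0 ≤ (N 0 0).re ∧ 0 ≤ (N 1 1).re ∧ (N 0 0).im = 0 ∧ (N 1 1).im = 0 ∧
    N 1 0 = star (N 0 1) ∧ Complex.normSq (N 0 1) ≤ (N 0 0).re * (N 1 1).re := by
  obtain ⟨hherm, hq⟩ := Matrix.posSemidef_iff_dotProduct_mulVec.mp hN
  have h00 : 0 ≤ N 0 0 := by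
    have := hq ![1, 0]
    simpa [dotProduct, mulVec, Fin.sum_univ_two] using this
  have h11 : 0 ≤ N 1 1 := by
    have := hq ![0, 1]
    simpa [dotProduct, mulVec, Fin.sum_univ_two] using this
  have h10 : N 1 0 = star (N 0 1) := (hherm.apply 1 0).symm
  refine ⟨(Complex.le_def.mp h00).1, (Complex.le_def.mp h11).1,
    ((Complex.le_def.mp h00).2).symm, ((Complex.le_def.mp h11).2).symm, h10, ?_⟩
  set α := (N 0 0).re with hα
  set β := (N 1 1).re with hβ
  set γ := N 0 1 with hγ
  have key : ∀ s : ℝ, 0 ≤ β * (s * s) + (-2 * Complex.normSq γ) * s + α * Complex.normSq γ := by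
    intro s
    have := hq ![γ, (-s : ℝ)]
    rw [Complex.le_def] at this
    have hre := this.1
    simp [dotProduct, mulVec, Fin.sum_univ_two, h10, Complex.add_re, Complex.mul_re,
      Complex.ofReal_re, Complex.ofReal_im, Complex.normSq_apply] at hre
    simp only [Complex.normSq_apply]
    ring_nf at hre ⊢
    linarith [hre]
  have hd := discrim_le_zero key
  rw [discrim] at hd
  rcases (Complex.normSq_nonneg γ).eq_or_lt with h0 | h0
  · rw [← h0]
    exact mul_nonneg (Complex.le_def.mp h00).1 (Complex.le_def.mp h11).1
  · nlinarith [hd, h0]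

lemma noisyId_one (η : ℝ) : noisyId η 1 = 1 := by
  simp only [noisyId, Matrix.trace_one]
  rw [smul_comm, ← smul_assoc, smul_eq_mul, ← add_smul]
  have : ((η : ℂ) + ((Fintype.card (Fin 2) : ℕ) : ℂ) * (((1 - η) / 2 : ℝ) : ℂ)) = 1 := by
    simp only [Fintype.card_fin]; push_cast; ring
  rw [this, one_smul]

lemma noisyId_traceless (η : ℝ) (A : M2) (h : A.trace = 0) : noisyId η A = (η : ℂ) • A := by
  simp [noisyId, h]

/-- Extraction of the scalar inequalities from positive semidefiniteness of
`1 + r₁ (e·σ) + r₂ (d·σ) + r₃ T`. -/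
lemma entry_facts (e d : Fin 3 → ℝ) (T : M2) (r1 r2 r3 : ℝ)
    (h : ((1 : M2) + (r1 : ℂ) • dotSigma e + (r2 : ℂ) • dotSigma d + (r3 : ℂ) • T).PosSemidef) :
    0 ≤ 1 + r1 * e 2 + r2 * d 2 + r3 * (T 0 0).re ∧
    0 ≤ 1 - r1 * e 2 - r2 * d 2 + r3 * (T 1 1).re ∧
    r3 * (T 0 0).im = 0 ∧
    r3 * (T 1 1).im = 0 ∧
    (r3 : ℂ) * T 1 0 = (r3 : ℂ) * star (T 0 1) ∧
    (r1 * e 0 + r2 * d 0 + r3 * (T 0 1).re) ^ 2 +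
        (r1 * e 1 + r2 * d 1 - r3 * (T 0 1).im) ^ 2 ≤
      (1 + r1 * e 2 + r2 * d 2 + r3 * (T 0 0).re) *
        (1 - r1 * e 2 - r2 * d 2 + r3 * (T 1 1).re) := by
  set N := (1 : M2) + (r1 : ℂ) • dotSigma e + (r2 : ℂ) • dotSigma d + (r3 : ℂ) • T with hNdef
  obtain ⟨p1, p2, p3, p4, p5, p6⟩ := psd2_facts N h
  have e00 : N 0 0 = 1 + (r1 : ℂ) * (e 2 : ℂ) + (r2 : ℂ) * (d 2 : ℂ) + (r3 : ℂ) * T 0 0 := by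
    simp [hNdef, Matrix.add_apply, Matrix.smul_apply, Matrix.one_apply, dotSigma_00,
      smul_eq_mul]
  have e11 : N 1 1 = 1 - (r1 : ℂ) * (e 2 : ℂ) - (r2 : ℂ) * (d 2 : ℂ) + (r3 : ℂ) * T 1 1 := by
    simp [hNdef, Matrix.add_apply, Matrix.smul_apply, Matrix.one_apply, dotSigma_11,
      smul_eq_mul]
    ring
  have e01 : N 0 1 = (r1 : ℂ) * ((e 0 : ℂ) - (e 1 : ℂ) * Complex.I)
      + (r2 : ℂ) * ((d 0 : ℂ) - (d 1 : ℂ) * Complex.I) + (r3 : ℂ) * T 0 1 := by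
    simp [hNdef, Matrix.add_apply, Matrix.smul_apply, Matrix.one_apply, dotSigma_01,
      smul_eq_mul]
  have e10 : N 1 0 = (r1 : ℂ) * ((e 0 : ℂ) + (e 1 : ℂ) * Complex.I)
      + (r2 : ℂ) * ((d 0 : ℂ) + (d 1 : ℂ) * Complex.I) + (r3 : ℂ) * T 1 0 := by
    simp [hNdef, Matrix.add_apply, Matrix.smul_apply, Matrix.one_apply, dotSigma_10,
      smul_eq_mul]
    ring
  rw [e00] at p1 p3 p6
  rw [e11] at p2 p4 p6
  rw [e01] at p6
  refine ⟨?_, ?_, ?_, ?_, ?_, ?_⟩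
  · simpa [Complex.add_re, Complex.sub_re, Complex.mul_re] using p1
  · simpa [Complex.add_re, Complex.sub_re, Complex.mul_re] using p2
  · simpa [Complex.add_im, Complex.sub_im, Complex.mul_im] using p3
  · simpa [Complex.add_im, Complex.sub_im, Complex.mul_im] using p4
  · rw [e01, e10] at p5
    simp only [star_add, Complex.star_def, _root_.map_mul, map_sub, Complex.conj_ofReal,
      Complex.conj_I, mul_neg, sub_neg_eq_add] at p5
    rw [Complex.star_def]
    linear_combination p5
  · have hns : Complex.normSq ((r1 : ℂ) * ((e 0 : ℂ) - (e 1 : ℂ) * Complex.I)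
        + (r2 : ℂ) * ((d 0 : ℂ) - (d 1 : ℂ) * Complex.I) + (r3 : ℂ) * T 0 1)
        = (r1 * e 0 + r2 * d 0 + r3 * (T 0 1).re) ^ 2 +
          (r1 * e 1 + r2 * d 1 - r3 * (T 0 1).im) ^ 2 := by
      simp [Complex.normSq_apply, Complex.add_re, Complex.add_im, Complex.sub_re,
        Complex.sub_im, Complex.mul_re, Complex.mul_im]
      ring
    rw [hns] at p6
    have hre1 : (1 + (r1 : ℂ) * (e 2 : ℂ) + (r2 : ℂ) * (d 2 : ℂ) + (r3 : ℂ) * T 0 0).re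
        = 1 + r1 * e 2 + r2 * d 2 + r3 * (T 0 0).re := by
      simp [Complex.add_re, Complex.mul_re]
    have hre2 : (1 - (r1 : ℂ) * (e 2 : ℂ) - (r2 : ℂ) * (d 2 : ℂ) + (r3 : ℂ) * T 1 1).re
        = 1 - r1 * e 2 - r2 * d 2 + r3 * (T 1 1).re := by
      simp [Complex.add_re, Complex.sub_re, Complex.mul_re]
    rw [hre1, hre2] at p6
    exact p6

theorem joint_map_orthogonal_vanishes (η₁ η₂ : ℝ)
    (h₁ : 0 ≤ η₁) (h₁' : η₁ ≤ 1) (h₂ : 0 ≤ η₂) (h₂' : η₂ ≤ 1)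
    (hcirc : η₁ ^ 2 + η₂ ^ 2 = 1)
    (Λ : M4 →ₗ[ℂ] M2) (hΛ : IsJointMap η₁ η₂ Λ)
    (e d : Fin 3 → ℝ) (he : (∑ i, e i ^ 2) = 1) (hd : (∑ i, d i ^ 2) = 1)
    (hed : (∑ i, e i * d i) = 0) :
    Λ (dotSigma e ⊗ₖ dotSigma d) = 0 := by
  obtain ⟨hpos, hm1, hm2⟩ := hΛ
  obtain ⟨T, hT⟩ : ∃ T : M2, Λ (dotSigma e ⊗ₖ dotSigma d) = T := ⟨_, rfl⟩
  rw [hT]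
  have hexp : ∀ s t : ℂ, Λ (((1 : M2) + s • dotSigma e) ⊗ₖ ((1 : M2) + t • dotSigma d)) =
      (1 : M2) + (s * η₁) • dotSigma e + (t * η₂) • dotSigma d + (s * t) • T := by
    intro s t
    rw [Matrix.add_kronecker, Matrix.kronecker_add, Matrix.kronecker_add,
      Matrix.smul_kronecker, Matrix.kronecker_smul, Matrix.kronecker_smul,
      Matrix.smul_kronecker, smul_smul]
    simp only [map_add, LinearMap.map_smul]
    rw [hm1 1, hm1 (dotSigma e), hm2 (dotSigma d), noisyId_one,
      noisyId_traceless _ _ (dotSigma_trace e), noisyId_traceless _ _ (dotSigma_trace d)]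
    rw [smul_smul, smul_smul, mul_comm t s, hT]
    abel
  have psdE : ((1 : M2) + (1 : ℂ) • dotSigma e).PosSemidef := by
    rw [one_smul]; exact one_add_dotSigma_psd e he
  have psdD : ((1 : M2) + (1 : ℂ) • dotSigma d).PosSemidef := by
    rw [one_smul]; exact one_add_dotSigma_psd d hd
  have psdE' : ((1 : M2) + (-1 : ℂ) • dotSigma e).PosSemidef := by
    rw [neg_one_smul, ← dotSigma_neg]
    exact one_add_dotSigma_psd _ (by simpa using he)
  have psdD' : ((1 : M2) + (-1 : ℂ) • dotSigma d).PosSemidef := by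
    rw [neg_one_smul, ← dotSigma_neg]
    exact one_add_dotSigma_psd _ (by simpa using hd)
  -- the four instantiations
  have hPP := entry_facts e d T η₁ η₂ 1 (by
    have := hpos _ _ psdE psdD
    rw [hexp] at this
    simpa using this)
  have hMM := entry_facts e d T (-η₁) (-η₂) 1 (by
    have := hpos _ _ psdE' psdD'
    rw [hexp] at this
    simpa [neg_mul, mul_neg] using this)
  have hPM := entry_facts e d T η₁ (-η₂) (-1) (by
    have := hpos _ _ psdE psdD'
    rw [hexp] at this
    simpa [neg_mul, mul_neg] using this)
  have hMP := entry_facts e d T (-η₁) η₂ (-1) (by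
    have := hpos _ _ psdE' psdD
    rw [hexp] at this
    simpa [neg_mul, mul_neg] using this)
  obtain ⟨q1, q1', -, -, q5, q6⟩ := hPP
  obtain ⟨q2, q2', -, -, -, q7⟩ := hMM
  obtain ⟨q3, q3', him0, him1, -, q8⟩ := hPM
  obtain ⟨q4, q4', -, -, -, q9⟩ := hMP
  clear hexp hpos hm1 hm2 psdE psdD psdE' psdD' hT Λ
  rw [Fin.sum_univ_three] at he hd hed
  set a := (T 0 0).re with ha
  set b := (T 1 1).re with hb
  set zr := (T 0 1).re with hzr
  set zi := (T 0 1).im with hzi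
  have hu : (η₁ * e 0 + η₂ * d 0) ^ 2 + (η₁ * e 1 + η₂ * d 1) ^ 2
      + (η₁ * e 2 + η₂ * d 2) ^ 2 = 1 := by
    linear_combination η₁ ^ 2 * he + η₂ ^ 2 * hd + 2 * η₁ * η₂ * hed + hcirc
  have hv : (η₁ * e 0 - η₂ * d 0) ^ 2 + (η₁ * e 1 - η₂ * d 1) ^ 2
      + (η₁ * e 2 - η₂ * d 2) ^ 2 = 1 := by
    linear_combination η₁ ^ 2 * he + η₂ ^ 2 * hd - 2 * η₁ * η₂ * hed + hcirc
  have hA : 1 + (zr ^ 2 + zi ^ 2) ≤ (1 + a) * (1 + b) := by linarith [q6, q7, hu]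
  have hB : 1 + (zr ^ 2 + zi ^ 2) ≤ (1 - a) * (1 - b) := by linarith [q8, q9, hv]
  have hC : 0 ≤ 2 + a + b := by linarith [q1, q1']
  have hD : 0 ≤ 2 - a - b := by linarith [q3, q3']
  have hZ : 0 ≤ zr ^ 2 + zi ^ 2 := by positivity
  have h1 : zr ^ 2 + zi ^ 2 ≤ a + b + a * b := by linarith [hA]
  have h2 : zr ^ 2 + zi ^ 2 ≤ -(a + b) + a * b := by linarith [hB]
  clear q1 q1' q2 q2' q3 q3' q4 q4' q6 q7 q8 q9 hu hv he hd hed hcirc hA hB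
  have hw1 : a * b - (zr ^ 2 + zi ^ 2) ≤ 1 := by nlinarith [h1, h2, hC, hD, hZ, sq_nonneg (a - b)]
  have hw0 : a * b - (zr ^ 2 + zi ^ 2) ≤ 0 := by
    nlinarith [h1, h2, hC, hD, hZ, hw1, sq_nonneg (a - b), sq_nonneg (a + b)]
  have hs0 : a + b = 0 := by linarith [h1, h2, hw0, hZ]
  have hb' : b = -a := by linarith
  rw [hb'] at h1
  have hzero : a ^ 2 + zr ^ 2 + zi ^ 2 ≤ 0 := by nlinarith [h1]
  have ha0 : a = 0 := by
    have : a ^ 2 = 0 := le_antisymm (by linarith [sq_nonneg zr, sq_nonneg zi]) (sq_nonneg a)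
    exact sq_eq_zero_iff.mp this
  have hb0 : b = 0 := by linarith [hs0, ha0]
  have hzr0 : zr = 0 := by
    have : zr ^ 2 = 0 := le_antisymm (by linarith [sq_nonneg a, sq_nonneg zi]) (sq_nonneg zr)
    exact sq_eq_zero_iff.mp this
  have hzi0 : zi = 0 := by
    have : zi ^ 2 = 0 := le_antisymm (by linarith [sq_nonneg a, sq_nonneg zr]) (sq_nonneg zi)
    exact sq_eq_zero_iff.mp this
  -- imaginary parts: from hPM facts with r3 = -1
  have him0' : (T 0 0).im = 0 := by linarith [him0]
  have him1' : (T 1 1).im = 0 := by linarith [him1]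
  have hT01 : T 0 1 = 0 := by
    apply Complex.ext <;> simp [← hzr, ← hzi, hzr0, hzi0]
  have hT10 : T 1 0 = 0 := by
    have := q5
    simp only [Complex.ofReal_one, one_mul] at this
    rw [this, hT01, star_zero]
  ext i j
  fin_cases i <;> fin_cases j <;> simp [Matrix.zero_apply]
  · exact Complex.ext (by simpa using ha0) (by simpa using him0')
  · exact hT01
  · exact hT10
  · exact Complex.ext (by simpa using hb0) (by simpa using him1')
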